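/- (Action of the Pauli searching oracle.) Fix x ∈ {0,1}^n. Define the maps on (1+n)-qubit matrices: C_I[ρ] = 2^{-n} Σ_{α} D_α ρ D_α† with D_α = diag(Q_α, −Q_α), and C_x[ρ] = 2^{-n} Σ_{i,j} E_{ij} ρ E_{ij}† with E_{ij} = diag(|i⟩⟨j|, |i⊕x⟩⟨j⊕x|), and set C_search = (2/3) C_x + (1/3) C_I. Then for every bitstring α ∈ {0,1}^n: C_search[X ⊗ Q_x] = (1/3)(X ⊗ Q_x), and C_search[X ⊗ Q_α] = −(1/3)(X ⊗ Q_α) for α ≠ x. Moreover C_I[X⊗Q_α] = −X⊗Q_α for all α, while C_x[X⊗Q_x] = X⊗Q_x and C_x[X⊗Q_α] = 0 for α ≠ x. -/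

import Mathlib

open Matrix BigOperators

/-- Bitstrings of length `n`. -/
abbrev BV (n : ℕ) : Type := Fin n → ZMod 2

/-- The Pauli X-string `Q_α`: `(Q_α)_{ij} = 1` iff `j = i ⊕ α`. -/
def Qx {n : ℕ} (α : BV n) : Matrix (BV n) (BV n) ℂ :=
  Matrix.of fun i j => if j = i + α then 1 else 0

/-- The channel `C_I[ρ] = 2^{-n} ∑_α diag(Q_α, −Q_α) ρ diag(Q_α, −Q_α)†`. -/
noncomputable def CI {n : ℕ} (ρ : Matrix (BV n ⊕ BV n) (BV n ⊕ BV n) ℂ) :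
    Matrix (BV n ⊕ BV n) (BV n ⊕ BV n) ℂ :=
  ((2 : ℂ) ^ n)⁻¹ •
    ∑ α : BV n,
      Matrix.fromBlocks (Qx α) 0 0 (-Qx α) * ρ *
        (Matrix.fromBlocks (Qx α) 0 0 (-Qx α))ᴴ

/-- The channel `C_x[ρ] = 2^{-n} ∑_{i,j} diag(|i⟩⟨j|, |i⊕x⟩⟨j⊕x|) ρ diag(...)†`. -/
noncomputable def Cx {n : ℕ} (x : BV n)
    (ρ : Matrix (BV n ⊕ BV n) (BV n ⊕ BV n) ℂ) :
    Matrix (BV n ⊕ BV n) (BV n ⊕ BV n) ℂ :=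
  ((2 : ℂ) ^ n)⁻¹ •
    ∑ i : BV n, ∑ j : BV n,
      Matrix.fromBlocks (Matrix.single i j (1 : ℂ)) 0 0
          (Matrix.single (i + x) (j + x) (1 : ℂ)) * ρ *
        (Matrix.fromBlocks (Matrix.single i j (1 : ℂ)) 0 0
          (Matrix.single (i + x) (j + x) (1 : ℂ)))ᴴ

/-- The Pauli searching oracle `C_search = (2/3) C_x + (1/3) C_I`. -/
noncomputable def Csearch {n : ℕ} (x : BV n)
    (ρ : Matrix (BV n ⊕ BV n) (BV n ⊕ BV n) ℂ) :
    Matrix (BV n ⊕ BV n) (BV n ⊕ BV n) ℂ :=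
  (2 / 3 : ℂ) • Cx x ρ + (1 / 3 : ℂ) • CI ρ

/-- The operator `X ⊗ Q_α` in `(1+n)`-qubit block form `[[0, Q_α],[Q_α, 0]]`. -/
def XQ {n : ℕ} (α : BV n) : Matrix (BV n ⊕ BV n) (BV n ⊕ BV n) ℂ :=
  Matrix.fromBlocks 0 (Qx α) (Qx α) 0

lemma bv_add_self {n : ℕ} (α : BV n) : α + α = 0 := by
  funext i
  show α i + α i = 0
  generalize α i = a; revert a; decide

lemma Qx_mul {n : ℕ} (α β : BV n) : Qx α * Qx β = Qx (α + β) := by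
  ext i j
  simp only [Qx, Matrix.mul_apply, Matrix.of_apply, ite_mul, one_mul, zero_mul]
  rw [Finset.sum_ite_eq' Finset.univ (i+α)]
  simp [add_assoc]

lemma Qx_ct {n : ℕ} (α : BV n) : (Qx α)ᴴ = Qx α := by
  ext i j
  simp only [Qx, conjTranspose_apply, Matrix.of_apply]
  have : (i = j + α) ↔ (j = i + α) := by
    constructor <;> intro h <;> subst h <;> rw [add_assoc, bv_add_self, add_zero]
  rw [if_congr this rfl rfl]
  split <;> simp

lemma std_ct {n : ℕ} (i j : BV n) :
    (Matrix.single i j (1:ℂ))ᴴ = Matrix.single j i 1 := by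
  ext p q
  simp [Matrix.single, conjTranspose_apply, apply_ite, and_comm]

lemma std_mul_Qx {n : ℕ} (i j : BV n) (α : BV n) :
    Matrix.single i j (1:ℂ) * Qx α = Matrix.single i (j+α) 1 := by
  ext p q
  simp only [Matrix.mul_apply, Qx, Matrix.single, Matrix.of_apply, ite_mul,
    one_mul, zero_mul, mul_ite, mul_one, mul_zero]
  rw [Finset.sum_eq_single j]
  · by_cases h1 : i = p <;> by_cases h2 : q = j + α <;> simp [h1, h2, eq_comm]
  · intro b _ hb; simp [Ne.symm hb]
  · simp

lemma sum_std1 {n : ℕ} (x : BV n) :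
    ∑ i : BV n, Matrix.single i (i+x) (1:ℂ) = Qx x := by
  ext p q
  simp only [Matrix.sum_apply, Matrix.single, Matrix.of_apply, Qx, ite_and]
  rw [Finset.sum_ite_eq' Finset.univ p]
  simp [eq_comm]

lemma sum_std2 {n : ℕ} (x : BV n) :
    ∑ i : BV n, Matrix.single (i+x) i (1:ℂ) = Qx x := by
  ext p q
  simp only [Matrix.sum_apply, Matrix.single, Matrix.of_apply, Qx, ite_and]
  rw [Finset.sum_eq_single q]
  · by_cases h2 : q = p + x
    · subst h2
      simp [show p + x + x = p by rw [add_assoc, bv_add_self, add_zero]]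
    · have hq : q + x ≠ p := fun h => h2 (by rw [← h, add_assoc, bv_add_self, add_zero])
      simp [hq, h2]
  · intro b _ hb; simp [hb]
  · simp

lemma card_bv (n : ℕ) : (Fintype.card (BV n)) = 2 ^ n := by
  simp [Fintype.card_fun]

lemma two_pow_ne (n : ℕ) : ((2:ℂ)^n) ≠ 0 := pow_ne_zero _ two_ne_zero

lemma CI_term {n : ℕ} (β α : BV n) :
    Matrix.fromBlocks (Qx β) 0 0 (-Qx β) * XQ α *
      (Matrix.fromBlocks (Qx β) 0 0 (-Qx β))ᴴ = -(XQ α) := by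
  have hβ : Qx β * Qx α * Qx β = Qx α := by
    rw [Qx_mul, Qx_mul, add_comm β α, add_assoc, bv_add_self, add_zero]
  simp [XQ, Matrix.fromBlocks_multiply, Matrix.fromBlocks_conjTranspose,
    Matrix.fromBlocks_neg, Qx_ct, hβ, Matrix.mul_assoc]

lemma CI_act {n : ℕ} (α : BV n) : CI (XQ α) = -(XQ α) := by
  unfold CI
  rw [Finset.sum_congr rfl (fun β _ => CI_term β α), Finset.sum_const,
    Finset.card_univ, card_bv, ← Nat.cast_smul_eq_nsmul ℂ, smul_smul]
  push_cast
  rw [inv_mul_cancel₀ (two_pow_ne n), one_smul]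

lemma Cx_term_eq {n : ℕ} (x i j : BV n) :
    Matrix.fromBlocks (Matrix.single i j (1 : ℂ)) 0 0
          (Matrix.single (i + x) (j + x) (1 : ℂ)) * XQ x *
        (Matrix.fromBlocks (Matrix.single i j (1 : ℂ)) 0 0
          (Matrix.single (i + x) (j + x) (1 : ℂ)))ᴴ =
    Matrix.fromBlocks 0 (Matrix.single i (i+x) 1) (Matrix.single (i+x) i 1) 0 := by
  have h1 : j + x + x = j := by rw [add_assoc, bv_add_self, add_zero]
  simp only [XQ, Matrix.fromBlocks_multiply, Matrix.fromBlocks_conjTranspose, std_ct,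
    Matrix.mul_zero, Matrix.zero_mul, zero_add, add_zero, std_mul_Qx, h1,
    Matrix.conjTranspose_zero]
  rw [Matrix.single_mul_single_same, Matrix.single_mul_single_same]
  norm_num

lemma Cx_term_ne {n : ℕ} (x α i j : BV n) (hα : α ≠ x) :
    Matrix.fromBlocks (Matrix.single i j (1 : ℂ)) 0 0
          (Matrix.single (i + x) (j + x) (1 : ℂ)) * XQ α *
        (Matrix.fromBlocks (Matrix.single i j (1 : ℂ)) 0 0
          (Matrix.single (i + x) (j + x) (1 : ℂ)))ᴴ = 0 := by
  have h1 : j + α ≠ j + x := fun h => hα (by exact add_left_cancel h)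
  have h2 : j + x + α ≠ j := fun h => by
    apply hα
    have h' : j + (x + α) = j + 0 := by rw [add_zero, ← add_assoc]; exact h
    have hx : x + α = 0 := add_left_cancel h'
    calc α = x + (x + α) := by rw [← add_assoc, bv_add_self, zero_add]
    _ = x := by rw [hx, add_zero]
  simp only [XQ, Matrix.fromBlocks_multiply, Matrix.fromBlocks_conjTranspose, std_ct,
    Matrix.mul_zero, Matrix.zero_mul, zero_add, add_zero, std_mul_Qx,
    Matrix.conjTranspose_zero]
  rw [Matrix.single_mul_single_of_ne (h := h1), Matrix.single_mul_single_of_ne (h := h2)]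
  exact Matrix.fromBlocks_zero

lemma Cx_act_ne {n : ℕ} (x α : BV n) (hα : α ≠ x) : Cx x (XQ α) = 0 := by
  unfold Cx
  rw [Finset.sum_congr rfl fun i _ =>
    Finset.sum_congr rfl fun j _ => Cx_term_ne x α i j hα]
  simp

lemma sum_fromBlocks {n : ℕ} {ι : Type*} (s : Finset ι)
    (A B : ι → Matrix (BV n) (BV n) ℂ) :
    ∑ i ∈ s, Matrix.fromBlocks 0 (A i) (B i) 0 =
      Matrix.fromBlocks 0 (∑ i ∈ s, A i) (∑ i ∈ s, B i) 0 := by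
  induction s using Finset.cons_induction with
  | empty => simp [← Matrix.fromBlocks_zero]
  | cons a s h ih => simp [Finset.sum_cons, ih, Matrix.fromBlocks_add]

lemma Cx_act_eq {n : ℕ} (x : BV n) : Cx x (XQ x) = XQ x := by
  unfold Cx
  rw [Finset.sum_congr rfl fun i _ =>
    Finset.sum_congr rfl fun j _ => Cx_term_eq x i j]
  have hs : ∑ i : BV n, Matrix.fromBlocks 0 (Matrix.single i (i+x) (1:ℂ))
      (Matrix.single (i+x) i 1) (0 : Matrix (BV n) (BV n) ℂ) = XQ x := by
    rw [sum_fromBlocks, sum_std1, sum_std2]; rfl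
  rw [Finset.sum_congr rfl fun i _ => (Finset.sum_const _),
    Finset.card_univ, card_bv, ← Finset.smul_sum, hs,
    ← Nat.cast_smul_eq_nsmul ℂ, smul_smul]
  push_cast
  rw [inv_mul_cancel₀ (two_pow_ne n), one_smul]

/-- Action of the Pauli searching oracle: `C_search[X⊗Q_x] = (1/3) X⊗Q_x` and
`C_search[X⊗Q_α] = −(1/3) X⊗Q_α` for `α ≠ x`; moreover `C_I[X⊗Q_α] = −X⊗Q_α`
for all `α`, while `C_x[X⊗Q_x] = X⊗Q_x` and `C_x[X⊗Q_α] = 0` for `α ≠ x`. -/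
theorem pauli_searching_oracle_action {n : ℕ} (x : BV n) :
    Csearch x (XQ x) = (1 / 3 : ℂ) • XQ x ∧
    (∀ α : BV n, α ≠ x → Csearch x (XQ α) = (-(1 / 3) : ℂ) • XQ α) ∧
    (∀ α : BV n, CI (XQ α) = -XQ α) ∧
    Cx x (XQ x) = XQ x ∧
    (∀ α : BV n, α ≠ x → Cx x (XQ α) = 0) := by
  refine ⟨?_, ?_, fun α => CI_act α, Cx_act_eq x, fun α h => Cx_act_ne x α h⟩
  · unfold Csearch
    rw [Cx_act_eq x, CI_act x, smul_neg, ← sub_eq_add_neg, ← sub_smul]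
    norm_num
  · intro α h
    unfold Csearch
    rw [Cx_act_ne x α h, CI_act α, smul_zero, zero_add, smul_neg, ← neg_smul]
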